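/- Let p_S, for S ⊆ [n], be real numbers satisfying p_S = p_{[n]∖S} for every S. Let z₂, …, zₙ be complex numbers with |z_i| = 1 for all 2 ≤ i ≤ n, and set A₁ = Σ_{S ⊆ {2,…,n}} p_{S ∪ {1}} ∏_{i ∈ S} z_i and B₁ = Σ_{S ⊆ {2,…,n}} p_S ∏_{i ∈ S} z_i. If A₁ ≠ 0, then the unique root ζ₁ = −B₁/A₁ of the equation A₁ z₁ + B₁ = 0 satisfies |ζ₁| = 1. -/

import Mathlib

open scoped Classical
open Finset

/-- Let `p_S` (for `S ⊆ [n]`, here `[n] = Fin (n+1)` with distinguished first index `0`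
playing the role of `1`) be real numbers with `p_S = p_{[n]∖S}`.  Let `z` satisfy
`|z_i| = 1` for all `i ≠ 0`, and set `A₁ = Σ_{S ∌ 0} p_{S∪{0}} ∏_{i∈S} z_i` and
`B₁ = Σ_{S ∌ 0} p_S ∏_{i∈S} z_i`.  If `A₁ ≠ 0` then the unique root `ζ₁ = −B₁/A₁` of
`A₁ z₁ + B₁ = 0` satisfies `|ζ₁| = 1`. -/

lemma stmt9_aux_inv {n : ℕ} (S : Finset (Fin (n + 1))) (hS : (0:Fin (n+1)) ∉ S) :
    (Sᶜ \ {0})ᶜ \ {0} = S := by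
  ext i
  simp only [Finset.mem_sdiff, Finset.mem_compl, Finset.mem_singleton]
  have : i ∈ S → i ≠ 0 := by rintro hi rfl; exact hS hi
  tauto

set_option maxHeartbeats 1000000 in
theorem stmt9 {n : ℕ} (p : Finset (Fin (n + 1)) → ℝ)
    (hsym : ∀ S : Finset (Fin (n + 1)), p S = p Sᶜ)
    (z : Fin (n + 1) → ℂ) (hz : ∀ i, i ≠ 0 → ‖z i‖ = 1)
    (hA : (∑ S ∈ (univ : Finset (Finset (Fin (n + 1)))).filter (fun S => 0 ∉ S),
        (p (insert 0 S) : ℂ) * ∏ i ∈ S, z i) ≠ 0) :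
    ‖(-(∑ S ∈ (univ : Finset (Finset (Fin (n + 1)))).filter (fun S => 0 ∉ S),
            (p S : ℂ) * ∏ i ∈ S, z i) /
        (∑ S ∈ (univ : Finset (Finset (Fin (n + 1)))).filter (fun S => 0 ∉ S),
            (p (insert 0 S) : ℂ) * ∏ i ∈ S, z i))‖ = 1 := by
  set F := (univ : Finset (Finset (Fin (n + 1)))).filter (fun S => 0 ∉ S) with hF
  set A := ∑ S ∈ F, (p (insert 0 S) : ℂ) * ∏ i ∈ S, z i with hAdef
  set B := ∑ S ∈ F, (p S : ℂ) * ∏ i ∈ S, z i with hBdef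
  have hz0 : ∀ i : Fin (n + 1), i ≠ 0 → z i ≠ 0 := by
    intro i hi h
    have := hz i hi
    rw [h] at this
    simp at this
  have hmemF : ∀ S : Finset (Fin (n + 1)), S ∈ F ↔ 0 ∉ S := by
    intro S; simp [hF]
  set W := ∏ i ∈ ({0}ᶜ : Finset (Fin (n + 1))), z i with hWdef
  have hW1 : ‖W‖ = 1 := by
    rw [hWdef, norm_prod]
    exact Finset.prod_eq_one fun i hi => hz i (by simpa using hi)
  have key : W * (starRingEnd ℂ) B = A := by
    rw [hBdef, map_sum, Finset.mul_sum, hAdef]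
    refine Finset.sum_nbij' (fun S => Sᶜ \ {0}) (fun S => Sᶜ \ {0}) ?_ ?_ ?_ ?_ ?_
    · intro S hS
      rw [hmemF]; simp
    · intro S hS
      rw [hmemF]; simp
    · intro S hS
      exact stmt9_aux_inv S ((hmemF S).1 hS)
    · intro S hS
      exact stmt9_aux_inv S ((hmemF S).1 hS)
    · intro S hS
      rw [hmemF] at hS
      have hsub : S ⊆ ({0}ᶜ : Finset (Fin (n + 1))) := by
        intro i hi
        simp only [Finset.mem_compl, Finset.mem_singleton]
        rintro rfl; exact hS hi
      have hsd : ({0}ᶜ : Finset (Fin (n + 1))) \ S = Sᶜ \ {0} := by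
        ext i
        simp only [Finset.mem_sdiff, Finset.mem_compl, Finset.mem_singleton]
        tauto
      have hprodne : (∏ i ∈ S, z i) ≠ 0 := by
        refine Finset.prod_ne_zero_iff.2 fun i hi => hz0 i ?_
        rintro rfl; exact hS hi
      have hins : insert (0 : Fin (n + 1)) (Sᶜ \ {0}) = Sᶜ := by
        ext i
        simp only [Finset.mem_insert, Finset.mem_sdiff, Finset.mem_compl,
          Finset.mem_singleton]
        constructor
        · rintro (rfl | ⟨h1, h2⟩)
          · exact hS
          · exact h1
        · intro h
          rcases eq_or_ne i 0 with rfl | h0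
          · exact Or.inl rfl
          · exact Or.inr ⟨h, h0⟩
      have hconj : ∀ i ∈ S, (starRingEnd ℂ) (z i) = (z i)⁻¹ := by
        intro i hi
        have hi0 : i ≠ 0 := by rintro rfl; exact hS hi
        have : z i * (starRingEnd ℂ) (z i) = 1 := by
          rw [Complex.mul_conj, Complex.normSq_eq_norm_sq, hz i hi0]
          norm_num
        field_simp [hz0 i hi0] at this ⊢
        linear_combination this
      rw [map_mul, Complex.conj_ofReal, map_prod, Finset.prod_congr rfl hconj,
        hins, ← hsym S]
      have hWsplit : W = (∏ i ∈ Sᶜ \ {0}, z i) * ∏ i ∈ S, z i := by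
        rw [hWdef, ← hsd, Finset.prod_sdiff hsub]
      rw [hWsplit, Finset.prod_inv_distrib]
      field_simp
  have habs : ‖B‖ = ‖A‖ := by
    have := congrArg (‖·‖) key
    rwa [norm_mul, hW1, Complex.norm_conj, one_mul] at this
  rw [norm_div, norm_neg, habs, div_self]
  exact fun h => hA (norm_eq_zero.1 h)
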